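/- Let A be a Banach algebra possessing a bounded right approximate identity and let I be a closed two-sided ideal of A, so that the quotient A/I is a Banach A-bimodule under the actions a·(b+I) = ab+I and (b+I)·a = ba+I. If every derivation on A is continuous and every derivation from A into A/I is continuous, then every derivation on the module extension Banach algebra T(A, A/I) is continuous. -/

import Mathlib

variable {A : Type*} [NonUnitalNormedRing A] [NormedSpace ℂ A]
  [IsScalarTower ℂ A A] [SMulCommClass ℂ A A]

/-- The left action of `A` on the quotient Banach `A`-bimodule `A ⧸ I`:
`a · (b + I) = a*b + I`.  Here `I` is a two-sided ideal of `A` which is a `ℂ`-submodule. -/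
def lact (I : Submodule ℂ A) (hIl : ∀ (a : A), ∀ x ∈ I, a * x ∈ I) (a : A) :
    (A ⧸ I) →ₗ[ℂ] (A ⧸ I) :=
  Submodule.mapQ I I (LinearMap.mulLeft ℂ a) (fun x hx => hIl a x hx)

/-- The right action of `A` on the quotient Banach `A`-bimodule `A ⧸ I`:
`(b + I) · a = b*a + I`. -/
def ract (I : Submodule ℂ A) (hIr : ∀ (a : A), ∀ x ∈ I, x * a ∈ I) (a : A) :
    (A ⧸ I) →ₗ[ℂ] (A ⧸ I) :=
  Submodule.mapQ I I (LinearMap.mulRight ℂ a) (fun x hx => hIr a x hx)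

/-- Multiplication of the module extension (trivial extension) Banach algebra
`T(A, A/I) = A × (A ⧸ I)`: `(a,u)(b,v) = (ab, a·v + u·b)`.  The ℓ¹-norm on the product
induces the product topology. -/
def trivMulQ (I : Submodule ℂ A) (hIl : ∀ (a : A), ∀ x ∈ I, a * x ∈ I)
    (hIr : ∀ (a : A), ∀ x ∈ I, x * a ∈ I) (x y : A × (A ⧸ I)) : A × (A ⧸ I) :=
  (x.1 * y.1, lact I hIl x.1 y.2 + ract I hIr y.1 x.2)

section aux

variable (I : Submodule ℂ A) (hIl : ∀ (a : A), ∀ x ∈ I, a * x ∈ I)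
  (hIr : ∀ (a : A), ∀ x ∈ I, x * a ∈ I)

lemma lact_mk (a b : A) :
    lact I hIl a (Submodule.Quotient.mk b) = Submodule.Quotient.mk (a * b) := rfl

lemma ract_mk (a b : A) :
    ract I hIr a (Submodule.Quotient.mk b) = Submodule.Quotient.mk (b * a) := rfl

lemma lact_zero (u : A ⧸ I) : lact I hIl 0 u = 0 := by
  obtain ⟨b, rfl⟩ := Submodule.Quotient.mk_surjective I u
  rw [lact_mk, zero_mul, Submodule.Quotient.mk_eq_zero]
  exact zero_mem I

lemma ract_zero (u : A ⧸ I) : ract I hIr 0 u = 0 := by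
  obtain ⟨b, rfl⟩ := Submodule.Quotient.mk_surjective I u
  rw [ract_mk, mul_zero, Submodule.Quotient.mk_eq_zero]
  exact zero_mem I

lemma mkQ_cont : Continuous (I.mkQ) :=
  AddMonoidHomClass.continuous_of_bound I.mkQ 1 fun x => by
    simpa using Submodule.Quotient.norm_mk_le I x

lemma ract_cont (b : A) : Continuous (ract I hIr b) := by
  apply AddMonoidHomClass.continuous_of_bound _ ‖b‖
  intro u
  refine le_of_forall_pos_le_add fun ε hε => ?_
  obtain ⟨m, hm, hmlt⟩ :=
    Submodule.Quotient.norm_mk_lt u (show (0:ℝ) < ε / (‖b‖ + 1) by positivity)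
  have h1 : ract I hIr b u = Submodule.Quotient.mk (m * b) := by rw [← hm, ract_mk]
  have h2 : ‖ract I hIr b u‖ ≤ ‖m‖ * ‖b‖ := by
    rw [h1]
    exact (Submodule.Quotient.norm_mk_le I _).trans (norm_mul_le m b)
  have hb : (0:ℝ) ≤ ‖b‖ := norm_nonneg b
  have hd : ε / (‖b‖ + 1) * ‖b‖ ≤ ε := by
    rw [div_mul_eq_mul_div, div_le_iff₀ (by positivity)]
    nlinarith
  nlinarith [hmlt, h2]

/-- lift continuity through the quotient -/
lemma lift_cont (Y : Type*) [SeminormedAddCommGroup Y] [NormedSpace ℂ Y]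
    (f : (A ⧸ I) →ₗ[ℂ] Y) (h : Continuous (f.comp I.mkQ)) : Continuous f := by
  set g : A →L[ℂ] Y := ⟨f.comp I.mkQ, h⟩ with hg
  apply AddMonoidHomClass.continuous_of_bound f (‖g‖ + 1)
  intro u
  refine le_of_forall_pos_le_add fun ε hε => ?_
  obtain ⟨m, hm, hmlt⟩ :=
    Submodule.Quotient.norm_mk_lt u (show (0:ℝ) < ε / (‖g‖ + 1) by positivity)
  have h1 : f u = g m := by
    rw [← hm]; rfl
  have h2 : ‖f u‖ ≤ ‖g‖ * ‖m‖ := h1 ▸ g.le_opNorm m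
  have hgn : (0:ℝ) ≤ ‖g‖ := norm_nonneg g
  have hun : (0:ℝ) ≤ ‖u‖ := norm_nonneg u
  have h3 : ‖g‖ * ‖m‖ ≤ ‖g‖ * (‖u‖ + ε / (‖g‖ + 1)) := by nlinarith
  have h4 : ‖g‖ * (ε / (‖g‖ + 1)) ≤ ε := by
    rw [mul_div_assoc', div_le_iff₀ (by positivity : (0:ℝ) < ‖g‖ + 1)]
    nlinarith
  calc ‖f u‖ ≤ ‖g‖ * (‖u‖ + ε / (‖g‖ + 1)) := h2.trans h3
    _ = ‖g‖ * ‖u‖ + ‖g‖ * (ε / (‖g‖ + 1)) := by ring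
    _ ≤ (‖g‖ + 1) * ‖u‖ + ε := by nlinarith

end aux

set_option maxHeartbeats 1000000 in
theorem stmt8 [CompleteSpace A]
    (I : Submodule ℂ A)
    (hIl : ∀ (a : A), ∀ x ∈ I, a * x ∈ I) (hIr : ∀ (a : A), ∀ x ∈ I, x * a ∈ I)
    (hIc : IsClosed (I : Set A))
    -- `A` has a bounded right approximate identity:
    (hbai : ∃ (C : ℝ) (F : Filter A), F.NeBot ∧ (∀ᶠ e in F, ‖e‖ ≤ C) ∧
      ∀ a : A, Filter.Tendsto (fun e => a * e) F (nhds a))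
    -- every derivation on `A` is continuous:
    (hdA : ∀ δ : A →ₗ[ℂ] A, (∀ a b : A, δ (a * b) = a * δ b + δ a * b) → Continuous δ)
    -- every derivation from `A` into `A ⧸ I` is continuous:
    (hdAI : ∀ δ : A →ₗ[ℂ] (A ⧸ I),
      (∀ a b : A, δ (a * b) = lact I hIl a (δ b) + ract I hIr b (δ a)) → Continuous δ) :
    -- every derivation on `T(A, A/I)` is continuous:
    ∀ D : (A × (A ⧸ I)) →ₗ[ℂ] (A × (A ⧸ I)),
      (∀ x y : A × (A ⧸ I),
        D (trivMulQ I hIl hIr x y)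
          = trivMulQ I hIl hIr x (D y) + trivMulQ I hIl hIr (D x) y) →
      Continuous D := by
  intro D hD
  haveI := hIc
  obtain ⟨C, F, hF, hC, hlim⟩ := hbai
  haveI := hF
  -- the four components
  set δ : A →ₗ[ℂ] A :=
    (LinearMap.fst ℂ A (A ⧸ I)).comp (D.comp (LinearMap.inl ℂ A (A ⧸ I))) with hδdef
  set d : A →ₗ[ℂ] (A ⧸ I) :=
    (LinearMap.snd ℂ A (A ⧸ I)).comp (D.comp (LinearMap.inl ℂ A (A ⧸ I))) with hddef
  set τ : (A ⧸ I) →ₗ[ℂ] A :=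
    (LinearMap.fst ℂ A (A ⧸ I)).comp (D.comp (LinearMap.inr ℂ A (A ⧸ I))) with hτdef
  set σ : (A ⧸ I) →ₗ[ℂ] (A ⧸ I) :=
    (LinearMap.snd ℂ A (A ⧸ I)).comp (D.comp (LinearMap.inr ℂ A (A ⧸ I))) with hσdef
  have hδa : ∀ a : A, δ a = (D (a, 0)).1 := fun a => rfl
  have hda : ∀ a : A, d a = (D (a, 0)).2 := fun a => rfl
  have hτu : ∀ u : A ⧸ I, τ u = (D (0, u)).1 := fun u => rfl
  have hσu : ∀ u : A ⧸ I, σ u = (D (0, u)).2 := fun u => rfl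
  -- derivation identities for δ and d
  have key1 : ∀ a b : A, D (a * b, (0 : A ⧸ I)) =
      trivMulQ I hIl hIr (a, 0) (D (b, 0)) + trivMulQ I hIl hIr (D (a, 0)) (b, 0) := by
    intro a b
    have := hD (a, 0) (b, 0)
    simpa [trivMulQ] using this
  have hδmul : ∀ a b : A, δ (a * b) = a * δ b + δ a * b := by
    intro a b
    have := congrArg Prod.fst (key1 a b)
    simpa [trivMulQ, hδa] using this
  have hdmul : ∀ a b : A, d (a * b) = lact I hIl a (d b) + ract I hIr b (d a) := by
    intro a b
    have := congrArg Prod.snd (key1 a b)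
    simpa [trivMulQ, hδa, hda] using this
  have hδc : Continuous δ := hdA δ hδmul
  have hdc : Continuous d := hdAI d hdmul
  -- mixed identities
  have key2 : ∀ (a : A) (v : A ⧸ I), D (0, lact I hIl a v) =
      trivMulQ I hIl hIr (a, 0) (D (0, v)) + trivMulQ I hIl hIr (D (a, 0)) (0, v) := by
    intro a v
    have := hD (a, 0) (0, v)
    simpa [trivMulQ, ract_zero] using this
  have hτl : ∀ (a : A) (v : A ⧸ I), τ (lact I hIl a v) = a * τ v := by
    intro a v
    have := congrArg Prod.fst (key2 a v)
    simpa [trivMulQ, hτu, hδa] using this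
  have hσl : ∀ (a : A) (v : A ⧸ I),
      σ (lact I hIl a v) = lact I hIl a (σ v) + lact I hIl (δ a) v := by
    intro a v
    have := congrArg Prod.snd (key2 a v)
    simpa [trivMulQ, hσu, hτu, hδa, ract_zero] using this
  have key3 : ∀ (u : A ⧸ I) (b : A), D (0, ract I hIr b u) =
      trivMulQ I hIl hIr (0, u) (D (b, 0)) + trivMulQ I hIl hIr (D (0, u)) (b, 0) := by
    intro u b
    have := hD (0, u) (b, 0)
    simpa [trivMulQ, lact_zero] using this
  have hτr : ∀ (u : A ⧸ I) (b : A), τ (ract I hIr b u) = τ u * b := by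
    intro u b
    have := congrArg Prod.fst (key3 u b)
    simpa [trivMulQ, hτu, hδa] using this
  have hσr : ∀ (u : A ⧸ I) (b : A),
      σ (ract I hIr b u) = ract I hIr (δ b) u + ract I hIr b (σ u) := by
    intro u b
    have := congrArg Prod.snd (key3 u b)
    simpa [trivMulQ, hσu, hτu, hδa, hda, lact_zero] using this
  -- ψ = τ ∘ mkQ is a bimodule map, hence continuous
  set ψ : A →ₗ[ℂ] A := τ.comp I.mkQ with hψdef
  have hψa : ∀ a : A, ψ a = τ (Submodule.Quotient.mk a) := fun a => rfl
  have hψ1 : ∀ a b : A, ψ (a * b) = a * ψ b := by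
    intro a b
    rw [hψa, ← lact_mk I hIl, hτl, ← hψa]
  have hψ2 : ∀ a b : A, ψ (a * b) = ψ a * b := by
    intro a b
    rw [hψa, ← ract_mk I hIr, hτr, ← hψa]
  have hψc : Continuous ψ := by
    apply LinearMap.continuous_of_seq_closed_graph
    intro u x y hux huy
    have h0 : Filter.Tendsto (fun n => u n - x) Filter.atTop (nhds 0) := by
      simpa using hux.sub (tendsto_const_nhds (x := x))
    have h1 : Filter.Tendsto (fun n => ψ (u n - x)) Filter.atTop (nhds (y - ψ x)) := by
      simp only [map_sub]
      exact huy.sub (tendsto_const_nhds (x := ψ x))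
    have hz : ∀ b : A, (y - ψ x) * b = 0 := by
      intro b
      have t1 : Filter.Tendsto (fun n => ψ (u n - x) * b) Filter.atTop
          (nhds ((y - ψ x) * b)) := h1.mul tendsto_const_nhds
      have t2 : (fun n => ψ (u n - x) * b) = fun n => (u n - x) * ψ b := by
        funext n; rw [← hψ2, hψ1]
      have t3 : Filter.Tendsto (fun n => (u n - x) * ψ b) Filter.atTop (nhds 0) := by
        simpa using h0.mul (tendsto_const_nhds (x := ψ b))
      rw [t2] at t1
      exact tendsto_nhds_unique t1 t3
    have hz0 : y - ψ x = 0 := by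
      have t4 : Filter.Tendsto (fun e => (y - ψ x) * e) F (nhds (y - ψ x)) := hlim _
      have t5 : Filter.Tendsto (fun _ : A => (0 : A)) F (nhds (y - ψ x)) := by
        simpa [hz] using t4
      exact tendsto_nhds_unique t5 tendsto_const_nhds
    linear_combination (norm := abel) hz0
  have hτc : Continuous τ := lift_cont I A τ hψc
  -- Θ = σ ∘ mkQ - mkQ ∘ δ is a bimodule map, hence continuous
  set Θ : A →ₗ[ℂ] (A ⧸ I) := (σ.comp I.mkQ) - (I.mkQ.comp δ) with hΘdef
  have hΘa : ∀ a : A, Θ a = σ (Submodule.Quotient.mk a) - Submodule.Quotient.mk (δ a) :=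
    fun a => rfl
  have hΘl : ∀ a b : A, Θ (a * b) = lact I hIl a (Θ b) := by
    intro a b
    rw [hΘa, hΘa, ← lact_mk I hIl a b, hσl, hδmul, map_sub]
    have e1 : (Submodule.Quotient.mk (a * δ b + δ a * b) : A ⧸ I)
        = lact I hIl a (Submodule.Quotient.mk (δ b)) + lact I hIl (δ a) (Submodule.Quotient.mk b) := by
      rw [lact_mk, lact_mk, ← Submodule.Quotient.mk_add]
    rw [e1]
    abel
  have hΘr : ∀ a b : A, Θ (a * b) = ract I hIr b (Θ a) := by
    intro a b
    rw [hΘa, hΘa, ← ract_mk I hIr b a, hσr, hδmul, map_sub]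
    have e1 : (Submodule.Quotient.mk (a * δ b + δ a * b) : A ⧸ I)
        = ract I hIr (δ b) (Submodule.Quotient.mk a) + ract I hIr b (Submodule.Quotient.mk (δ a)) := by
      rw [ract_mk, ract_mk, ← Submodule.Quotient.mk_add]
    rw [e1]
    abel
  have hΘc : Continuous Θ := by
    apply LinearMap.continuous_of_seq_closed_graph
    intro u x y hux huy
    have h0 : Filter.Tendsto (fun n => u n - x) Filter.atTop (nhds 0) := by
      simpa using hux.sub (tendsto_const_nhds (x := x))
    have h1 : Filter.Tendsto (fun n => Θ (u n - x)) Filter.atTop (nhds (y - Θ x)) := by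
      simp only [map_sub]
      exact huy.sub (tendsto_const_nhds (x := Θ x))
    have hz : ∀ b : A, ract I hIr b (y - Θ x) = 0 := by
      intro b
      have t1 : Filter.Tendsto (fun n => ract I hIr b (Θ (u n - x))) Filter.atTop
          (nhds (ract I hIr b (y - Θ x))) := ((ract_cont I hIr b).tendsto _).comp h1
      have t2 : (fun n => ract I hIr b (Θ (u n - x))) = fun n => lact I hIl (u n - x) (Θ b) := by
        funext n; rw [← hΘr, hΘl]
      obtain ⟨c, hc⟩ := Submodule.Quotient.mk_surjective I (Θ b)
      have t3 : Filter.Tendsto (fun n => lact I hIl (u n - x) (Θ b)) Filter.atTop (nhds 0) := by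
        have : (fun n => lact I hIl (u n - x) (Θ b))
            = fun n => I.mkQ ((u n - x) * c) := by
          funext n; rw [← hc, lact_mk]; rfl
        rw [this]
        have t4 : Filter.Tendsto (fun n => (u n - x) * c) Filter.atTop (nhds 0) := by
          simpa using h0.mul (tendsto_const_nhds (x := c))
        have := ((mkQ_cont I).tendsto 0).comp t4
        simpa [Function.comp_def] using this
      rw [t2] at t1
      exact tendsto_nhds_unique t1 t3
    have hz0 : y - Θ x = 0 := by
      obtain ⟨c, hc⟩ := Submodule.Quotient.mk_surjective I (y - Θ x)
      have hcb : ∀ b : A, c * b ∈ I := by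
        intro b
        have := hz b
        rw [← hc, ract_mk, Submodule.Quotient.mk_eq_zero] at this
        exact this
      have hcI : c ∈ I := by
        refine hIc.mem_of_tendsto (hlim c) (Filter.Eventually.of_forall fun e => hcb e)
      rw [← hc, Submodule.Quotient.mk_eq_zero]
      exact hcI
    linear_combination (norm := abel) hz0
  have hSc : Continuous fun a : A => σ (Submodule.Quotient.mk a) := by
    have : (fun a : A => σ (Submodule.Quotient.mk a))
        = fun a : A => Θ a + I.mkQ (δ a) := by
      funext a; rw [hΘa, Submodule.mkQ_apply]; abel
    rw [this]
    exact hΘc.add ((mkQ_cont I).comp hδc)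
  have hσc : Continuous σ := lift_cont I (A ⧸ I) σ (by exact hSc)
  -- assemble
  have hDx : ∀ x : A × (A ⧸ I), D x = (δ x.1 + τ x.2, d x.1 + σ x.2) := by
    intro x
    have hx : x = (x.1, (0 : A ⧸ I)) + ((0 : A), x.2) := by
      ext <;> simp
    rw [show D x = D ((x.1, (0 : A ⧸ I)) + ((0 : A), x.2)) from by rw [← hx], map_add]
    rw [hδa, hda, hτu, hσu]
    rfl
  have : ⇑D = fun x : A × (A ⧸ I) => (δ x.1 + τ x.2, d x.1 + σ x.2) := funext hDx
  rw [this]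
  exact ((hδc.comp continuous_fst).add (hτc.comp continuous_snd)).prodMk
    ((hdc.comp continuous_fst).add (hσc.comp continuous_snd))
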